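/- For every l ∈ ℕ and ρ > 0 there exist constants c, C > 0 (depending only on l) such that for every f ∈ K^{l,ρ}: c · ‖ e^{2πρ|k|}(1 + |k|^l) · 𝓕f(k) ‖_{ℓ²(ℤ)} ≤ ‖f‖_{K^{l,ρ}} ≤ C · ‖ e^{2πρ|k|}(1 + |k|^l) · 𝓕f(k) ‖_{ℓ²(ℤ)}, where 𝓕f(k) := ∫_𝕋 f(s) e^{−2πiks} ds are the Fourier coefficients of the restriction of f to the real line. -/

import Mathlib

/- STATEMENT 18: (Equivalence of the K^{l,ρ} norm with a weighted Sobolev norm on the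
Fourier side.) For every l ∈ ℕ there are constants c, C > 0 depending only on l such
that for every ρ > 0 and every f ∈ K^{l,ρ}:
  c·‖e^{2πρ|k|}(1+|k|^l)𝓕f(k)‖_{ℓ²(ℤ)} ≤ ‖f‖_{K^{l,ρ}} ≤ C·‖e^{2πρ|k|}(1+|k|^l)𝓕f(k)‖_{ℓ²(ℤ)},
where 𝓕f(k) = ∫_𝕋 f(s)e^{−2πiks} ds are the Fourier coefficients of the restriction of
f to the real line. -/

open MeasureTheory intervalIntegral Complex Real
open scoped ENNReal

noncomputable section

/-- The horizontal strip `U_ρ = {w : |Im w| < ρ}`. -/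
def Strip (ρ : ℝ) : Set ℂ := {w : ℂ | |w.im| < ρ}

/-- The `L²` norm over one period of a function on the real line. -/
noncomputable def L2Tnorm (f : ℝ → ℂ) : ℝ :=
  (∫ s in (0:ℝ)..1, ‖f s‖ ^ 2) ^ (1/2 : ℝ)

/-- The `K^{l,ρ}` norm. -/
noncomputable def Knorm (l : ℕ) (ρ : ℝ) (f : ℂ → ℂ) : ℝ :=
  ∑ α ∈ Finset.range (l + 1),
    sSup {r : ℝ | ∃ y : ℝ, |y| < ρ ∧
      r = L2Tnorm (fun s : ℝ => iteratedDeriv α f (s + y * Complex.I))}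

/-- Membership in `K^{l,ρ}`. -/
def MemK (l : ℕ) (ρ : ℝ) (f : ℂ → ℂ) : Prop :=
  DifferentiableOn ℂ f (Strip ρ) ∧
  (∀ w ∈ Strip ρ, f (w + 1) = f w) ∧
  ∀ α ≤ l,
    (∀ y : ℝ, |y| < ρ →
      IntervalIntegrable (fun s : ℝ => ‖iteratedDeriv α f (s + y * Complex.I)‖ ^ 2)
        MeasureTheory.volume 0 1) ∧
    BddAbove {r : ℝ | ∃ y : ℝ, |y| < ρ ∧
      r = L2Tnorm (fun s : ℝ => iteratedDeriv α f (s + y * Complex.I))}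

/-- The `k`-th Fourier coefficient of the restriction of `f : ℂ → ℂ` to ℝ. -/
noncomputable def fourierCoef (f : ℂ → ℂ) (k : ℤ) : ℂ :=
  ∫ s in (0:ℝ)..1, f (s : ℂ) * Complex.exp (-2 * π * Complex.I * k * s)

/-- The weighted `ℓ²(ℤ)` norm `‖e^{2πρ|k|}(1+|k|^l)𝓕f(k)‖_{ℓ²(ℤ)}`. -/
noncomputable def fourierWeightedNorm (l : ℕ) (ρ : ℝ) (f : ℂ → ℂ) : ℝ :=
  (∑' k : ℤ, (Real.exp (2 * π * ρ * |(k : ℝ)|) * (1 + |(k : ℝ)| ^ l) *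
      ‖fourierCoef f k‖) ^ 2) ^ (1/2 : ℝ)

lemma isOpen_strip (ρ : ℝ) : IsOpen (Strip ρ) := by
  have : Strip ρ = (fun w : ℂ => |w.im|) ⁻¹' Set.Iio ρ := rfl
  rw [this]
  exact (continuous_abs.comp Complex.continuous_im).isOpen_preimage _ isOpen_Iio

lemma mem_strip_of_abs {ρ y : ℝ} (hy : |y| < ρ) (s : ℝ) : (s + y * Complex.I) ∈ Strip ρ := by
  simp [Strip, Complex.add_im, Complex.ofReal_im, Complex.mul_im, Complex.I_im, Complex.I_re,
    Complex.ofReal_re, hy]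

lemma analyticOnNhd_iteratedDeriv {ρ : ℝ} {f : ℂ → ℂ} (hd : DifferentiableOn ℂ f (Strip ρ)) :
    ∀ α : ℕ, AnalyticOnNhd ℂ (iteratedDeriv α f) (Strip ρ) := by
  intro α
  induction α with
  | zero => simpa [iteratedDeriv_zero] using hd.analyticOnNhd (isOpen_strip ρ)
  | succ n ih => rw [iteratedDeriv_succ]; exact ih.deriv

lemma iteratedDeriv_periodic {ρ : ℝ} {f : ℂ → ℂ} (hd : DifferentiableOn ℂ f (Strip ρ))
    (hp : ∀ w ∈ Strip ρ, f (w + 1) = f w) :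
    ∀ α : ℕ, ∀ w ∈ Strip ρ, iteratedDeriv α f (w + 1) = iteratedDeriv α f w := by
  intro α
  induction α with
  | zero => simpa using hp
  | succ n ih =>
    intro w hw
    rw [iteratedDeriv_succ]
    have h1 : deriv (fun x => iteratedDeriv n f (x + 1)) w = deriv (iteratedDeriv n f) (w + 1) :=
      deriv_comp_add_const _ _ _
    rw [← h1]
    apply Filter.EventuallyEq.deriv_eq
    filter_upwards [(isOpen_strip ρ).mem_nhds hw] with x hx
    exact ih x hx

lemma hasDerivAt_line {G : ℂ → ℂ} {z : ℂ} (hG : DifferentiableAt ℂ G z) (y : ℝ) (s : ℝ)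
    (hz : z = s + y * Complex.I) :
    HasDerivAt (fun t : ℝ => G (t + y * Complex.I)) (deriv G z) s := by
  subst hz
  have h1 : HasDerivAt G (deriv G (s + y * Complex.I)) (s + y * Complex.I) := hG.hasDerivAt
  have h2 : HasDerivAt (fun w : ℂ => G (w + y * Complex.I))
      (deriv G (s + y * Complex.I)) (s : ℂ) := by
    have := (h1.comp (s : ℂ) ((hasDerivAt_id (s : ℂ)).add_const (y * Complex.I)))
    rw [mul_one] at this
    exact this
  exact h2.comp_ofReal

def FC (h : ℝ → ℂ) (k : ℤ) : ℂ := ∫ s in (0:ℝ)..1, h s * Complex.exp (-2*π*Complex.I*k*s)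

lemma FC_eq_fourierCoeffOn (h : ℝ → ℂ) (k : ℤ) :
    FC h k = fourierCoeffOn (zero_lt_one) h k := by
  rw [fourierCoeffOn_eq_integral]
  norm_num
  rw [FC]
  apply intervalIntegral.integral_congr
  intro s hs
  simp only []
  rw [mul_comm, ← Complex.exp_conj]
  congr 1
  simp only [map_mul, Complex.conj_I, Complex.conj_ofReal, map_intCast, map_ofNat]
  ring

lemma fourierCoeff_lift_eq_FC {h : ℝ → ℂ} (hp : Function.Periodic h 1) (k : ℤ) :
    @fourierCoeff 1 ⟨zero_lt_one⟩ ℂ _ _ hp.lift k = FC h k := by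
  rw [fourierCoeff_eq_intervalIntegral _ k 0, FC]
  norm_num
  apply intervalIntegral.integral_congr
  intro s hs
  simp only [Function.Periodic.lift_coe]
  rw [mul_comm, ← Complex.exp_conj]
  congr 1
  simp only [map_mul, Complex.conj_I, Complex.conj_ofReal, map_intCast, map_ofNat]
  ring

lemma parseval_periodic {h : ℝ → ℂ} (hc : Continuous h) (hp : Function.Periodic h 1) :
    HasSum (fun k : ℤ => ‖FC h k‖ ^ 2) (∫ s in (0:ℝ)..1, ‖h s‖ ^ 2) := by
  haveI : Fact ((0:ℝ) < 1) := ⟨zero_lt_one⟩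
  have hH : Continuous hp.lift := hc.quotient_liftOn' _
  set Hcm : C(AddCircle 1, ℂ) := ⟨hp.lift, hH⟩ with hHcm
  set f2 := ContinuousMap.toLp (E := ℂ) 2 (@AddCircle.haarAddCircle 1 _) ℂ Hcm with hf2
  have hcoeff : ∀ k : ℤ, fourierCoeff (⇑f2) k = FC h k := by
    intro k
    rw [fourierCoeff_toLp]
    exact fourierCoeff_lift_eq_FC hp k
  have hsum : Summable fun k : ℤ => ‖fourierCoeff (⇑f2) k‖ ^ 2 := by
    have h1 : Summable fun k : ℤ => ‖fourierBasis.repr f2 k‖ ^ (2:ℝ≥0∞).toReal :=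
      (lp.memℓp (fourierBasis.repr f2)).summable (by norm_num)
    have h2 : (fun k : ℤ => ‖fourierBasis.repr f2 k‖ ^ (2:ℝ≥0∞).toReal)
        = fun k : ℤ => ‖fourierCoeff (⇑f2) k‖ ^ 2 := by
      funext k
      rw [fourierBasis_repr]
      norm_num [Real.rpow_natCast]
    rwa [h2] at h1
  have hts := tsum_sq_fourierCoeff f2
  have hint : (∫ t : AddCircle 1, ‖f2 t‖ ^ 2 ∂(@AddCircle.haarAddCircle 1 _))
      = ∫ s in (0:ℝ)..1, ‖h s‖ ^ 2 := by
    have hae : (⇑f2) =ᵐ[@AddCircle.haarAddCircle 1 _] Hcm :=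
      ContinuousMap.coeFn_toLp (@AddCircle.haarAddCircle 1 _) (𝕜 := ℂ) Hcm
    have : ∫ t : AddCircle 1, ‖f2 t‖ ^ 2 ∂(@AddCircle.haarAddCircle 1 _)
        = ∫ t : AddCircle 1, ‖Hcm t‖ ^ 2 ∂(@AddCircle.haarAddCircle 1 _) := by
      apply MeasureTheory.integral_congr_ae
      filter_upwards [hae] with t ht
      rw [ht]
    rw [this]
    have hvol : (volume : Measure (AddCircle (1:ℝ))) = (@AddCircle.haarAddCircle 1 _) := by
      rw [AddCircle.volume_eq_smul_haarAddCircle]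
      simp
    rw [← hvol]
    have := AddCircle.intervalIntegral_preimage 1 0 (fun t => ‖Hcm t‖ ^ 2)
    rw [zero_add] at this
    rw [← this]
    apply intervalIntegral.integral_congr
    intro s hs
    simp [hHcm]
  have : HasSum (fun k : ℤ => ‖fourierCoeff (⇑f2) k‖ ^ 2)
      (∫ s in (0:ℝ)..1, ‖h s‖ ^ 2) := by
    rw [← hint, ← hts]
    exact hsum.hasSum
  simpa [hcoeff] using this

lemma FC_zero_of_deriv {g g' : ℝ → ℂ} (hg : ∀ s, HasDerivAt g (g' s) s)
    (hc' : Continuous g') (hper : Function.Periodic g 1) :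
    FC g' 0 = 0 := by
  have : FC g' 0 = ∫ s in (0:ℝ)..1, g' s := by
    rw [FC]
    apply intervalIntegral.integral_congr
    intro s hs
    norm_num
  rw [this, intervalIntegral.integral_eq_sub_of_hasDerivAt (fun x _ => hg x)
    (hc'.intervalIntegrable 0 1)]
  have := hper 0
  simp only [zero_add] at this
  rw [this, sub_self]

lemma FC_deriv {g g' : ℝ → ℂ} (hg : ∀ s, HasDerivAt g (g' s) s)
    (hc' : Continuous g') (hper : Function.Periodic g 1) (k : ℤ) :
    FC g' k = 2 * π * Complex.I * k * FC g k := by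
  rcases eq_or_ne k 0 with rfl | hk
  · simpa using FC_zero_of_deriv hg hc' hper
  · rw [FC_eq_fourierCoeffOn, FC_eq_fourierCoeffOn]
    have h := fourierCoeffOn_of_hasDerivAt zero_lt_one hk
      (fun x _ => hg x) (hc'.intervalIntegrable 0 1)
    have hg10 : g 1 - g 0 = 0 := by
      have := hper 0
      simp only [zero_add] at this
      rw [this, sub_self]
    rw [hg10] at h
    simp only [mul_zero, zero_sub, sub_zero] at h
    rw [h]
    have h2 : (2 * (π:ℂ) * Complex.I * k) ≠ 0 := by
      simp [Complex.I_ne_zero, Real.pi_ne_zero, hk]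
    field_simp
    simp

lemma FC_shift {ρ : ℝ} {f : ℂ → ℂ} (hd : DifferentiableOn ℂ f (Strip ρ))
    (hp : ∀ w ∈ Strip ρ, f (w + 1) = f w) {y : ℝ} (hy : |y| < ρ) (k : ℤ) :
    FC (fun s : ℝ => f (s + y * Complex.I)) k
      = Complex.exp (-(2 * π * k * y)) * FC (fun s : ℝ => f (s : ℂ)) k := by
  set Φ : ℂ → ℂ := fun w => f w * Complex.exp (-2 * π * Complex.I * k * w) with hΦ
  have hrect : (Set.uIcc (0:ℂ).re (1 + y*Complex.I : ℂ).re ×ℂ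
      Set.uIcc (0:ℂ).im (1 + y*Complex.I : ℂ).im) ⊆ Strip ρ := by
    intro w hw
    rw [Complex.mem_reProdIm] at hw
    have h2 := hw.2
    simp only [Complex.zero_im, Complex.add_im, Complex.one_im, Complex.mul_im,
      Complex.I_im, Complex.I_re, Complex.ofReal_im, Complex.ofReal_re] at h2
    have : w.im ∈ Set.uIcc (0:ℝ) y := by simpa using h2
    rw [Set.uIcc_eq_union] at this
    have habs : |w.im| ≤ |y| := by
      rcases this with h | h
      · rw [Set.mem_Icc] at h
        rw [abs_le]
        constructor
        · linarith [abs_nonneg y]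
        · exact le_trans h.2 (le_abs_self y)
      · rw [Set.mem_Icc] at h
        rw [abs_le]
        constructor
        · linarith [neg_abs_le y]
        · linarith [abs_nonneg y]
    exact lt_of_le_of_lt habs hy
  have hΦd : DifferentiableOn ℂ Φ (Strip ρ) := by
    apply DifferentiableOn.mul hd
    apply Differentiable.differentiableOn
    apply Differentiable.cexp
    apply Differentiable.const_mul
    exact differentiable_id
  have hcau := Complex.integral_boundary_rect_eq_zero_of_differentiableOn Φ 0 (1 + y * Complex.I)
    (hΦd.mono hrect)
  simp only [Complex.zero_re, Complex.zero_im, Complex.add_re, Complex.one_re, Complex.mul_re,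
    Complex.I_re, Complex.I_im, Complex.ofReal_re, Complex.ofReal_im, Complex.add_im,
    Complex.one_im, Complex.mul_im] at hcau
  norm_num at hcau
  have habs_uIcc : ∀ t : ℝ, t ∈ Set.uIcc (0:ℝ) y → |t| ≤ |y| := by
    intro t ht
    rw [Set.uIcc_eq_union] at ht
    rcases ht with h | h <;> rw [Set.mem_Icc] at h <;> rw [abs_le] <;> constructor
    · linarith [abs_nonneg y]
    · exact le_trans h.2 (le_abs_self y)
    · linarith [neg_abs_le y]
    · linarith [abs_nonneg y]
  have hvert : (∫ t in (0:ℝ)..y, Φ (1 + t * Complex.I))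
      = ∫ t in (0:ℝ)..y, Φ (t * Complex.I) := by
    apply intervalIntegral.integral_congr
    intro t ht
    have htmem : (t : ℂ) * Complex.I ∈ Strip ρ := by
      have : ((t : ℂ) * Complex.I).im = t := by simp
      simp only [Strip, Set.mem_setOf_eq, this]
      exact lt_of_le_of_lt (habs_uIcc t ht) hy
    simp only [hΦ]
    have h1 : (1:ℂ) + t * Complex.I = t * Complex.I + 1 := by ring
    rw [h1, hp _ htmem]
    congr 1
    rw [show (-2*(π:ℂ)*Complex.I*k*((t:ℂ)*Complex.I+1))
        = (-2*(π:ℂ)*Complex.I*k*((t:ℂ)*Complex.I)) + ((-k : ℤ):ℂ)*(2*(π:ℂ)*Complex.I) by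
      push_cast; ring]
    rw [Complex.exp_add, Complex.exp_int_mul_two_pi_mul_I, mul_one]
  rw [hvert] at hcau
  have hAB : (∫ x in (0:ℝ)..1, Φ x) = ∫ x in (0:ℝ)..1, Φ (x + y * Complex.I) := by
    linear_combination hcau
  have hA : (∫ x in (0:ℝ)..1, Φ x) = FC (fun s : ℝ => f (s : ℂ)) k := rfl
  have hB : (∫ x in (0:ℝ)..1, Φ (x + y * Complex.I))
      = Complex.exp (2*π*k*y) * FC (fun s : ℝ => f (s + y * Complex.I)) k := by
    rw [FC, ← intervalIntegral.integral_const_mul]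
    apply intervalIntegral.integral_congr
    intro s hs
    simp only [hΦ]
    rw [show (-2*(π:ℂ)*Complex.I*k*((s:ℂ)+(y:ℂ)*Complex.I))
        = (-2*(π:ℂ)*Complex.I*k*(s:ℂ)) + 2*(π:ℂ)*k*y by
      linear_combination (-2*(π:ℂ)*k*y) * Complex.I_sq]
    rw [Complex.exp_add]
    ring
  have hkey : FC (fun s : ℝ => f (s : ℂ)) k
      = Complex.exp (2*π*k*y) * FC (fun s : ℝ => f (s + y * Complex.I)) k := by
    rw [← hA, hAB, hB]
  rw [hkey, ← mul_assoc, ← Complex.exp_add]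
  norm_num

section Main

variable {ρ : ℝ} {f : ℂ → ℂ}

lemma fourierCoef_eq_FC (f : ℂ → ℂ) (k : ℤ) :
    (∫ s in (0:ℝ)..1, f (s : ℂ) * Complex.exp (-2 * π * Complex.I * k * s)) = FC (fun s : ℝ => f (s : ℂ)) k := rfl

variable (hd : DifferentiableOn ℂ f (Strip ρ)) (hp : ∀ w ∈ Strip ρ, f (w + 1) = f w)
  (hρ : 0 < ρ)

include hd hp

lemma continuous_g {y : ℝ} (hy : |y| < ρ) (α : ℕ) :
    Continuous (fun s : ℝ => iteratedDeriv α f (s + y * Complex.I)) := by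
  rw [continuous_iff_continuousAt]
  intro s
  exact ContinuousAt.comp (x := s)
    (f := fun t : ℝ => (t : ℂ) + y * Complex.I) (g := iteratedDeriv α f)
    ((analyticOnNhd_iteratedDeriv hd α _ (mem_strip_of_abs hy s)).continuousAt)
    ((Complex.continuous_ofReal.add continuous_const).continuousAt)

lemma periodic_g {y : ℝ} (hy : |y| < ρ) (α : ℕ) :
    Function.Periodic (fun s : ℝ => iteratedDeriv α f (s + y * Complex.I)) 1 := by
  intro s
  show iteratedDeriv α f (((s + 1 : ℝ) : ℂ) + y * Complex.I)
      = iteratedDeriv α f ((s : ℂ) + y * Complex.I)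
  have h1 : ((s + 1 : ℝ) : ℂ) + y * Complex.I = ((s : ℂ) + y * Complex.I) + 1 := by
    push_cast; ring
  rw [h1]
  exact iteratedDeriv_periodic hd hp α _ (mem_strip_of_abs hy s)

lemma hasDerivAt_g {y : ℝ} (hy : |y| < ρ) (α : ℕ) (s : ℝ) :
    HasDerivAt (fun t : ℝ => iteratedDeriv α f (t + y * Complex.I))
      (iteratedDeriv (α + 1) f (s + y * Complex.I)) s := by
  have hG : DifferentiableAt ℂ (iteratedDeriv α f) (s + y * Complex.I) :=
    (analyticOnNhd_iteratedDeriv hd α _ (mem_strip_of_abs hy s)).differentiableAt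
  have := hasDerivAt_line hG y s rfl
  rwa [show deriv (iteratedDeriv α f) (s + y * Complex.I)
    = iteratedDeriv (α + 1) f (s + y * Complex.I) by rw [iteratedDeriv_succ]] at this

lemma FC_iter {y : ℝ} (hy : |y| < ρ) (α : ℕ) (k : ℤ) :
    FC (fun s : ℝ => iteratedDeriv α f (s + y * Complex.I)) k
      = (2 * π * Complex.I * k)^α * Complex.exp (-(2 * π * k * y))
        * FC (fun s : ℝ => f (s : ℂ)) k := by
  induction α with
  | zero =>
    simp only [iteratedDeriv_zero, pow_zero, one_mul]
    exact FC_shift hd hp hy k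
  | succ n ih =>
    have hstep := FC_deriv (g := fun s : ℝ => iteratedDeriv n f (s + y * Complex.I))
      (g' := fun s : ℝ => iteratedDeriv (n+1) f (s + y * Complex.I))
      (hasDerivAt_g hd hp hy n) (continuous_g hd hp hy (n+1)) (periodic_g hd hp hy n) k
    rw [hstep, ih]
    ring

end Main

lemma L2Tnorm_eq_sqrt (f : ℝ → ℂ) :
    L2Tnorm f = Real.sqrt (∫ s in (0:ℝ)..1, ‖f s‖ ^ 2) := by
  rw [L2Tnorm, Real.sqrt_eq_rpow]

lemma integral_sq_nonneg (f : ℝ → ℂ) : 0 ≤ ∫ s in (0:ℝ)..1, ‖f s‖ ^ 2 :=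
  intervalIntegral.integral_nonneg zero_le_one (fun s _ => by positivity)

section Main2

variable {ρ : ℝ} {f : ℂ → ℂ}

lemma hasSum_P (hd : DifferentiableOn ℂ f (Strip ρ)) (hp : ∀ w ∈ Strip ρ, f (w + 1) = f w)
    {y : ℝ} (hy : |y| < ρ) (α : ℕ) :
    HasSum (fun k : ℤ => ((2 * π * |(k:ℝ)|)^α * Real.exp (-(2 * π * k * y))
        * ‖FC (fun s : ℝ => f (s : ℂ)) k‖)^2)
      (∫ s in (0:ℝ)..1, ‖iteratedDeriv α f (s + y * Complex.I)‖^2) := by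
  have h := parseval_periodic (continuous_g hd hp hy α) (periodic_g hd hp hy α)
  have hnorm : ∀ k : ℤ, ‖FC (fun s : ℝ => iteratedDeriv α f (s + y * Complex.I)) k‖
      = (2 * π * |(k:ℝ)|)^α * Real.exp (-(2 * π * k * y)) * ‖FC (fun s : ℝ => f (s : ℂ)) k‖ := by
    intro k
    rw [FC_iter hd hp hy α k, norm_mul, norm_mul, norm_pow]
    congr 2
    · congr 1
      simp only [norm_mul, Complex.norm_I, Complex.norm_real, Complex.norm_intCast,
        Complex.norm_ofNat, Real.norm_eq_abs]
      rw [abs_of_pos Real.pi_pos]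
      push_cast
      ring
    · rw [Complex.norm_exp]
      congr 1
      simp [Complex.neg_re, Complex.mul_re]
  simpa only [hnorm] using h

end Main2

section Key

variable {l : ℕ} {ρ : ℝ} {f : ℂ → ℂ}

lemma key (hρ : 0 < ρ) (hd : DifferentiableOn ℂ f (Strip ρ))
    (hp : ∀ w ∈ Strip ρ, f (w + 1) = f w)
    (hb : ∀ α ≤ l, BddAbove {r : ℝ | ∃ y : ℝ, |y| < ρ ∧
      r = L2Tnorm (fun s : ℝ => iteratedDeriv α f (s + y * Complex.I))}) :
    Real.sqrt (∑' k : ℤ, (Real.exp (2 * π * ρ * |(k : ℝ)|) * (1 + |(k : ℝ)| ^ l) *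
        ‖FC (fun s : ℝ => f (s : ℂ)) k‖) ^ 2)
      ≤ 4 * (∑ α ∈ Finset.range (l + 1), sSup {r : ℝ | ∃ y : ℝ, |y| < ρ ∧
          r = L2Tnorm (fun s : ℝ => iteratedDeriv α f (s + y * Complex.I))}) ∧
    (∑ α ∈ Finset.range (l + 1), sSup {r : ℝ | ∃ y : ℝ, |y| < ρ ∧
        r = L2Tnorm (fun s : ℝ => iteratedDeriv α f (s + y * Complex.I))})
      ≤ (∑ α ∈ Finset.range (l + 1), (2 * π) ^ α) *
        Real.sqrt (∑' k : ℤ, (Real.exp (2 * π * ρ * |(k : ℝ)|) * (1 + |(k : ℝ)| ^ l) *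
          ‖FC (fun s : ℝ => f (s : ℂ)) k‖) ^ 2) := by
  set F : ℤ → ℝ := fun k => ‖FC (fun s : ℝ => f (s : ℂ)) k‖ with hF
  set M : ℕ → ℝ := fun α => sSup {r : ℝ | ∃ y : ℝ, |y| < ρ ∧
      r = L2Tnorm (fun s : ℝ => iteratedDeriv α f (s + y * Complex.I))} with hM
  set q : ℕ → ℤ → ℝ → ℝ :=
    fun α k y => ((2 * π * |(k:ℝ)|)^α * Real.exp (-(2 * π * k * y)) * F k)^2 with hq
  set q' : ℕ → ℤ → ℝ :=
    fun α k => ((2 * π * |(k:ℝ)|)^α * Real.exp (2 * π * ρ * |(k:ℝ)|) * F k)^2 with hq'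
  set W : ℤ → ℝ := fun k => (Real.exp (2 * π * ρ * |(k:ℝ)|) * (1 + |(k:ℝ)|^l) * F k)^2 with hW
  have hFnn : ∀ k, 0 ≤ F k := fun k => norm_nonneg _
  have hqnn : ∀ α k y, 0 ≤ q α k y := fun α k y => sq_nonneg _
  have hq'nn : ∀ α k, 0 ≤ q' α k := fun α k => sq_nonneg _
  have hWnn : ∀ k, 0 ≤ W k := fun k => sq_nonneg _
  have hMnn : ∀ α, 0 ≤ M α := by
    intro α
    apply Real.sSup_nonneg
    rintro r ⟨y, hy, rfl⟩
    rw [L2Tnorm_eq_sqrt]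
    exact Real.sqrt_nonneg _
  have hsum_y : ∀ α : ℕ, ∀ y : ℝ, |y| < ρ → HasSum (fun k => q α k y)
      (∫ s in (0:ℝ)..1, ‖iteratedDeriv α f (s + y * Complex.I)‖^2) :=
    fun α y hy => hasSum_P hd hp hy α
  have hPle : ∀ α ≤ l, ∀ y : ℝ, |y| < ρ →
      (∫ s in (0:ℝ)..1, ‖iteratedDeriv α f (s + y * Complex.I)‖^2) ≤ M α ^ 2 := by
    intro α hα y hy
    have hmem : L2Tnorm (fun s : ℝ => iteratedDeriv α f (s + y * Complex.I))
        ∈ {r : ℝ | ∃ y : ℝ, |y| < ρ ∧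
          r = L2Tnorm (fun s : ℝ => iteratedDeriv α f (s + y * Complex.I))} := ⟨y, hy, rfl⟩
    have h1 := le_csSup (hb α hα) hmem
    rw [L2Tnorm_eq_sqrt] at h1
    have h2 := pow_le_pow_left₀ (Real.sqrt_nonneg _) h1 2
    rwa [Real.sq_sqrt (integral_sq_nonneg _)] at h2
  have hq_le_q' : ∀ α (k : ℤ) (y : ℝ), |y| < ρ → q α k y ≤ q' α k := by
    intro α k y hy
    have hexp : Real.exp (-(2 * π * k * y)) ≤ Real.exp (2 * π * ρ * |(k:ℝ)|) := by
      apply Real.exp_le_exp.mpr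
      have h1 : -((k:ℝ) * y) ≤ |(k:ℝ)| * |y| := by
        rw [← abs_mul]; exact neg_le_abs _
      have h2 : |(k:ℝ)| * |y| ≤ |(k:ℝ)| * ρ := by
        apply mul_le_mul_of_nonneg_left hy.le (abs_nonneg _)
      nlinarith [Real.pi_pos]
    simp only [hq, hq']
    gcongr
  have hsigned : ∀ α ≤ l, ∀ ε : ℝ, (ε = 1 ∨ ε = -1) → ∀ s : Finset ℤ,
      (∀ k ∈ s, |(k:ℝ)| = ε * k) → ∑ k ∈ s, q' α k ≤ M α ^ 2 := by
    intro α hα ε hε s hs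
    set yseq : ℕ → ℝ := fun n => -ε * (ρ - ρ/(n+1)) with hyseq
    have hdivpos : ∀ n : ℕ, 0 < ρ/((n:ℝ)+1) := fun n => by positivity
    have hdivle : ∀ n : ℕ, ρ/((n:ℝ)+1) ≤ ρ := by
      intro n
      rw [div_le_iff₀ (by positivity)]
      nlinarith [(Nat.cast_nonneg n : (0:ℝ) ≤ n), hρ]
    have hyabs : ∀ n, |yseq n| < ρ := by
      intro n
      have h1 := hdivpos n
      have h2 := hdivle n
      have h3 : 0 ≤ ρ - ρ/((n:ℝ)+1) := by linarith
      have h4 : |yseq n| = ρ - ρ/((n:ℝ)+1) := by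
        have h5 : |ρ - ρ/((n:ℝ)+1)| = ρ - ρ/((n:ℝ)+1) := _root_.abs_of_nonneg h3
        rcases hε with rfl | rfl <;> simp only [hyseq, neg_mul, one_mul, neg_neg, abs_neg] <;>
          rw [← h5] <;> simp [abs_mul]
      rw [h4]
      linarith
    have hlim0 : Filter.Tendsto (fun n : ℕ => ρ/((n:ℝ)+1)) Filter.atTop (nhds 0) := by
      refine Filter.Tendsto.congr (fun n => ?_)
        ((tendsto_const_div_atTop_nhds_zero_nat ρ).comp (Filter.tendsto_add_atTop_nat 1))
      show ρ / (((n + 1 : ℕ) : ℝ)) = ρ / ((n:ℝ) + 1)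
      push_cast
      ring
    have hlim : Filter.Tendsto yseq Filter.atTop (nhds (-ε * ρ)) := by
      have h1 : Filter.Tendsto (fun n : ℕ => ρ - ρ/((n:ℝ)+1)) Filter.atTop (nhds (ρ - 0)) :=
        tendsto_const_nhds.sub hlim0
      rw [sub_zero] at h1
      exact h1.const_mul _
    have hcontq : ∀ k : ℤ, Continuous (fun y : ℝ => q α k y) := by
      intro k
      simp only [hq]
      fun_prop
    have hcont : Filter.Tendsto (fun n => ∑ k ∈ s, q α k (yseq n)) Filter.atTop
        (nhds (∑ k ∈ s, q α k (-ε * ρ))) := by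
      apply tendsto_finset_sum
      intro k _
      exact ((hcontq k).continuousAt).tendsto.comp hlim
    have hbnd : ∀ n, ∑ k ∈ s, q α k (yseq n) ≤ M α ^ 2 := by
      intro n
      refine le_trans (sum_le_hasSum s (fun k _ => hqnn α k _) (hsum_y α _ (hyabs n))) ?_
      exact hPle α hα _ (hyabs n)
    have hfinal := le_of_tendsto hcont (Filter.Eventually.of_forall hbnd)
    have hcongr : ∀ k ∈ s, q α k (-ε * ρ) = q' α k := by
      intro k hk
      simp only [hq, hq']
      congr 3
      rw [hs k hk]
      ring
    rwa [Finset.sum_congr rfl hcongr] at hfinal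
  have hpart : ∀ α ≤ l, ∀ s : Finset ℤ, ∑ k ∈ s, q' α k ≤ 2 * M α ^ 2 := by
    intro α hα s
    rw [← Finset.sum_filter_add_sum_filter_not s (fun k => 0 ≤ k)]
    have h1 := hsigned α hα 1 (Or.inl rfl) (s.filter (fun k => 0 ≤ k)) (by
      intro k hk
      rw [Finset.mem_filter] at hk
      rw [one_mul, _root_.abs_of_nonneg (show (0:ℝ) ≤ (k:ℝ) by exact_mod_cast hk.2)])
    have h2 := hsigned α hα (-1) (Or.inr rfl) (s.filter (fun k => ¬ 0 ≤ k)) (by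
      intro k hk
      rw [Finset.mem_filter] at hk
      have : (k:ℝ) < 0 := by exact_mod_cast lt_of_not_ge hk.2
      rw [_root_.abs_of_neg this]; ring)
    linarith
  have hsummable : ∀ α ≤ l, Summable (q' α) := by
    intro α hα
    exact summable_of_sum_le (fun k => hq'nn α k) (hpart α hα)
  have htsum_le : ∀ α ≤ l, ∑' k, q' α k ≤ 2 * M α ^ 2 := by
    intro α hα
    exact Summable.tsum_le_of_sum_le (hsummable α hα) (hpart α hα)
  have hM_le : ∀ α ≤ l, M α ≤ Real.sqrt (∑' k, q' α k) := by
    intro α hα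
    apply csSup_le
    · exact ⟨_, 0, by simpa using hρ, rfl⟩
    · rintro r ⟨y, hy, rfl⟩
      rw [L2Tnorm_eq_sqrt]
      apply Real.sqrt_le_sqrt
      rw [← (hsum_y α y hy).tsum_eq]
      exact Summable.tsum_le_tsum (fun k => hq_le_q' α k y hy) (hsum_y α y hy).summable (hsummable α hα)
  -- comparison of W with q' 0 and q' l
  have h2pi1 : (1:ℝ) ≤ 2 * π := by nlinarith [Real.pi_gt_three]
  have hW2 : ∀ k, W k ≤ 2 * q' 0 k + 2 * q' l k := by
    intro k
    set x := |(k:ℝ)| with hx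
    have hxnn : 0 ≤ x := abs_nonneg _
    set E := Real.exp (2 * π * ρ * x) with hE
    have hEnn : 0 ≤ E := Real.exp_nonneg _
    have ht : x^l ≤ (2*π*x)^l := by
      apply pow_le_pow_left₀ hxnn
      nlinarith
    have hq'0 : q' 0 k = (E * F k)^2 := by simp [hq', hE, hx]
    have hq'l : q' l k = ((2*π*x)^l)^2 * (E * F k)^2 := by simp only [hq']; ring
    have hWk : W k = (1 + x^l)^2 * (E * F k)^2 := by simp only [hW]; ring
    rw [hWk, hq'0, hq'l]
    have h1 : (1 + x^l)^2 ≤ 2 + 2 * (x^l)^2 := by nlinarith [sq_nonneg (x^l - 1)]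
    have h2 : (x^l)^2 ≤ ((2*π*x)^l)^2 := pow_le_pow_left₀ (pow_nonneg hxnn l) ht 2
    nlinarith [sq_nonneg (E * F k), mul_nonneg (mul_nonneg hEnn (hFnn k)) (mul_nonneg hEnn (hFnn k))]
  have hWsummable : Summable W := by
    apply Summable.of_nonneg_of_le hWnn hW2
    exact ((hsummable 0 (Nat.zero_le l)).mul_left 2).add ((hsummable l le_rfl).mul_left 2)
  have hWtsum : ∑' k, W k ≤ 4 * M 0 ^ 2 + 4 * M l ^ 2 := by
    have h1 : ∑' k, W k ≤ ∑' k, (2 * q' 0 k + 2 * q' l k) :=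
      Summable.tsum_le_tsum hW2 hWsummable
        (((hsummable 0 (Nat.zero_le l)).mul_left 2).add ((hsummable l le_rfl).mul_left 2))
    have h2 : ∑' k, (2 * q' 0 k + 2 * q' l k)
        = 2 * (∑' k, q' 0 k) + 2 * (∑' k, q' l k) := by
      rw [Summable.tsum_add ((hsummable 0 (Nat.zero_le l)).mul_left 2) ((hsummable l le_rfl).mul_left 2),
        tsum_mul_left, tsum_mul_left]
    have h3 := htsum_le 0 (Nat.zero_le l)
    have h4 := htsum_le l le_rfl
    rw [h2] at h1
    linarith
  constructor
  · -- lower bound direction: sqrt(∑ W) ≤ 4 * ∑ M α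
    have hstep : Real.sqrt (∑' k, W k) ≤ 2 * (M 0 + M l) := by
      have h1 : ∑' k, W k ≤ (2 * (M 0 + M l))^2 := by
        have := hWtsum
        nlinarith [hMnn 0, hMnn l, mul_nonneg (hMnn 0) (hMnn l)]
      calc Real.sqrt (∑' k, W k) ≤ Real.sqrt ((2 * (M 0 + M l))^2) := Real.sqrt_le_sqrt h1
        _ = 2 * (M 0 + M l) := Real.sqrt_sq (by linarith [hMnn 0, hMnn l])
    have hM0 : M 0 ≤ ∑ α ∈ Finset.range (l + 1), M α :=
      Finset.single_le_sum (fun i _ => hMnn i) (Finset.mem_range.mpr (Nat.succ_pos l))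
    have hMl : M l ≤ ∑ α ∈ Finset.range (l + 1), M α :=
      Finset.single_le_sum (fun i _ => hMnn i) (Finset.self_mem_range_succ l)
    calc Real.sqrt (∑' k, W k) ≤ 2 * (M 0 + M l) := hstep
      _ ≤ 4 * ∑ α ∈ Finset.range (l + 1), M α := by linarith
  · -- upper bound direction
    have hαbound : ∀ α ∈ Finset.range (l + 1), M α ≤ (2*π)^α * Real.sqrt (∑' k, W k) := by
      intro α hαmem
      have hα : α ≤ l := Nat.lt_succ_iff.mp (Finset.mem_range.mp hαmem)
      have hxl : ∀ x : ℝ, 0 ≤ x → x^α ≤ 1 + x^l := by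
        intro x hx
        rcases le_or_gt x 1 with h | h
        · have h1 : x^α ≤ 1 := pow_le_one₀ hx h
          have h2 : 0 ≤ x^l := by positivity
          linarith
        · have h1 : x^α ≤ x^l := pow_le_pow_right₀ h.le hα
          linarith
      have hq'W : ∀ k, q' α k ≤ ((2*π)^α)^2 * W k := by
        intro k
        have h1 : q' α k = ((2*π)^α)^2 * ((|(k:ℝ)|^α) * (Real.exp (2*π*ρ*|(k:ℝ)|) * F k))^2 := by
          simp only [hq']; ring
        have h2 : ((2*π)^α)^2 * W k
            = ((2*π)^α)^2 * ((1 + |(k:ℝ)|^l) * (Real.exp (2*π*ρ*|(k:ℝ)|) * F k))^2 := by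
          simp only [hW]; ring
        rw [h1, h2]
        apply mul_le_mul_of_nonneg_left _ (sq_nonneg ((2*π)^α))
        apply pow_le_pow_left₀ (mul_nonneg (pow_nonneg (abs_nonneg _) α)
          (mul_nonneg (Real.exp_nonneg _) (hFnn k)))
        exact mul_le_mul_of_nonneg_right (hxl _ (abs_nonneg _))
          (mul_nonneg (Real.exp_nonneg _) (hFnn k))
      have htq : ∑' k, q' α k ≤ ((2*π)^α)^2 * ∑' k, W k := by
        rw [← tsum_mul_left]
        exact Summable.tsum_le_tsum hq'W (hsummable α hα) (hWsummable.mul_left _)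
      calc M α ≤ Real.sqrt (∑' k, q' α k) := hM_le α hα
        _ ≤ Real.sqrt (((2*π)^α)^2 * ∑' k, W k) := Real.sqrt_le_sqrt htq
        _ = (2*π)^α * Real.sqrt (∑' k, W k) := by
            rw [Real.sqrt_mul (sq_nonneg _), Real.sqrt_sq (by positivity)]
    calc (∑ α ∈ Finset.range (l + 1), M α)
        ≤ ∑ α ∈ Finset.range (l + 1), (2*π)^α * Real.sqrt (∑' k, W k) :=
          Finset.sum_le_sum hαbound
      _ = (∑ α ∈ Finset.range (l + 1), (2*π)^α) * Real.sqrt (∑' k, W k) := by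
          rw [← Finset.sum_mul]

end Key


theorem Knorm_equiv_fourier_weighted_norm (l : ℕ) :
    ∃ c C : ℝ, 0 < c ∧ 0 < C ∧
      ∀ ρ : ℝ, 0 < ρ → ∀ f : ℂ → ℂ, MemK l ρ f →
        c * fourierWeightedNorm l ρ f ≤ Knorm l ρ f ∧
        Knorm l ρ f ≤ C * fourierWeightedNorm l ρ f := by
  refine ⟨1/4, ∑ α ∈ Finset.range (l + 1), (2 * π) ^ α, by norm_num, ?_, ?_⟩
  · apply Finset.sum_pos (fun α _ => by positivity)
    exact ⟨0, Finset.mem_range.mpr (Nat.succ_pos l)⟩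
  · intro ρ hρ f hK
    obtain ⟨hd, hp, hK3⟩ := hK
    have hb : ∀ α ≤ l, BddAbove {r : ℝ | ∃ y : ℝ, |y| < ρ ∧
        r = L2Tnorm (fun s : ℝ => iteratedDeriv α f (s + y * Complex.I))} :=
      fun α hα => (hK3 α hα).2
    have hkey := key hρ hd hp hb
    have hFW : fourierWeightedNorm l ρ f
        = Real.sqrt (∑' k : ℤ, (Real.exp (2 * π * ρ * |(k : ℝ)|) * (1 + |(k : ℝ)| ^ l) *
            ‖FC (fun s : ℝ => f (s : ℂ)) k‖) ^ 2) := by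
      rw [fourierWeightedNorm, Real.sqrt_eq_rpow]
      rfl
    have hKn : Knorm l ρ f = ∑ α ∈ Finset.range (l + 1),
        sSup {r : ℝ | ∃ y : ℝ, |y| < ρ ∧
          r = L2Tnorm (fun s : ℝ => iteratedDeriv α f (s + y * Complex.I))} := rfl
    rw [hFW, hKn]
    exact ⟨by linarith [hkey.1], hkey.2⟩

end
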